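/- Let f_2 = 1 + 2x(1−3x+3x²)²/((1−x)(1−2x)⁴). Then the coefficient of x^n in f_2 equals 2 + ((n−1)(n²+n+42)/3)·2^(n−4) for all n ≥ 1, and equals 1 for n = 0. -/

import Mathlib

open PowerSeries

noncomputable def aa : ℕ → ℚ := fun n =>
  if n = 0 then 1 else 2 + (((n : ℚ) - 1) * ((n : ℚ) ^ 2 + n + 42) / 3) * (2 : ℚ) ^ ((n : ℤ) - 4)

noncomputable def gg : PowerSeries ℚ := PowerSeries.mk aa

theorem key : gg * ((1 - X) * (1 - 2 * X) ^ 4) =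
    (1 - X) * (1 - 2 * X) ^ 4 + 2 * X * (1 - 3 * X + 3 * X ^ 2) ^ 2 := by
  have h1 : gg * ((1 - X) * (1 - 2 * X) ^ 4) =
      gg - C (9 : ℚ) * (gg * X ^ 1) + C (32 : ℚ) * (gg * X ^ 2) - C (56 : ℚ) * (gg * X ^ 3)
        + C (48 : ℚ) * (gg * X ^ 4) - C (16 : ℚ) * (gg * X ^ 5) := by
    simp only [map_ofNat]; ring
  have h2 : (1 - X) * (1 - 2 * X) ^ 4 + 2 * X * (1 - 3 * X + 3 * X ^ 2) ^ 2 =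
      (1 : PowerSeries ℚ) - C (7 : ℚ) * X ^ 1 + C (20 : ℚ) * X ^ 2 - C (26 : ℚ) * X ^ 3 + C (12 : ℚ) * X ^ 4
        + C (2 : ℚ) * X ^ 5 := by
    simp only [map_ofNat]; ring
  rw [h1, h2]
  ext n
  simp only [map_add, map_sub, coeff_C_mul, coeff_mul_X_pow', coeff_X_pow, gg, coeff_mk,
    coeff_one]
  rcases lt_or_ge n 6 with h | h
  · interval_cases n <;> norm_num [aa]
  · obtain ⟨m, rfl⟩ := Nat.exists_eq_add_of_le h
    have e1 : 6 + m - 1 = 5 + m := by omega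
    have e2 : 6 + m - 2 = 4 + m := by omega
    have e3 : 6 + m - 3 = 3 + m := by omega
    have e4 : 6 + m - 4 = 2 + m := by omega
    have e5 : 6 + m - 5 = 1 + m := by omega
    simp only [show (1:ℕ) ≤ 6 + m by omega, show (2:ℕ) ≤ 6 + m by omega,
      show (3:ℕ) ≤ 6 + m by omega, show (4:ℕ) ≤ 6 + m by omega,
      show (5:ℕ) ≤ 6 + m by omega, if_true, e1, e2, e3, e4, e5, aa,
      show 6 + m ≠ 0 by omega, show 5 + m ≠ 0 by omega, show 4 + m ≠ 0 by omega,
      show 3 + m ≠ 0 by omega, show 2 + m ≠ 0 by omega, show 1 + m ≠ 0 by omega, if_false,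
      show 6 + m ≠ 1 by omega, show 6 + m ≠ 2 by omega, show 6 + m ≠ 3 by omega,
      show 6 + m ≠ 4 by omega, show 6 + m ≠ 5 by omega, show (6:ℕ) + m ≠ 0 by omega, coeff_C]
    have z : ∀ k : ℕ, ((k + m : ℕ) : ℤ) - 4 = (k - 4 : ℤ) + m := by intro k; push_cast; ring
    push_cast
    have hk : ∀ k : ℤ, (2:ℚ) ^ (k + (m:ℤ) - 4) = 2 ^ (k - 1) * 2 ^ ((m:ℤ) - 3) := by
      intro k
      rw [← zpow_add₀ (by norm_num : (2:ℚ) ≠ 0)]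
      ring_nf
    simp only [hk]
    norm_num
    ring_nf



open PowerSeries in
/-- Coefficients of `f = 1 + 2x(1−3x+3x²)²/((1−x)(1−2x)⁴)`: the constant term
is `1`, and for `n ≥ 1` the coefficient of `xⁿ` equals
`2 + ((n−1)(n²+n+42)/3)·2^(n−4)` (with an integer power of `2`). -/
theorem boundary_planar_coeff (f : PowerSeries ℚ)
    (hf : f = 1 + 2 * X * (1 - 3 * X + 3 * X ^ 2) ^ 2 *
      ((1 - X) * (1 - 2 * X) ^ 4)⁻¹) :
    coeff 0 f = 1 ∧
      ∀ n : ℕ, 1 ≤ n → coeff n f =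
        2 + (((n : ℚ) - 1) * ((n : ℚ) ^ 2 + n + 42) / 3) * (2 : ℚ) ^ ((n : ℤ) - 4) := by
  have hD : constantCoeff (((1 : PowerSeries ℚ) - X) * (1 - 2 * X) ^ 4) ≠ 0 := by simp
  have hu : (((1 : PowerSeries ℚ) - X) * (1 - 2 * X) ^ 4) * ((1 - X) * (1 - 2 * X) ^ 4)⁻¹ = 1 :=
    PowerSeries.mul_inv_cancel _ hD
  have hg : f = gg := by
    rw [hf]
    have h := congrArg (· * ((1 - X) * (1 - 2 * X) ^ 4)⁻¹) key
    simp only [mul_assoc, hu, mul_one, add_mul] at h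
    rw [h]
    ring
  constructor
  · simp [hg, gg, aa]
  · intro n hn
    rw [hg]
    simp only [gg, coeff_mk, aa, if_neg (by omega : ¬ n = 0)]
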